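/- Let r ∈ (0,1/2), let a,b,c,d ∈ ℝ, and set λ = a+b+c−4d+3. If λ ≠ 0, then the integral D_r(a,b,c,d) = ∫_{A_r} x₁^a x₂^b x₃^c Δ(x₁,x₂,x₃)^{−d} dx₁ dx₂ dx₃ satisfies D_r(a,b,c,d) = (1/λ) ∫_{Ω_r} u^a v^b Q(u,v)^{−d} (1 − (r/u)^λ) du dv, as an identity of Lebesgue integrals of nonnegative functions with values in [0,∞]. -/

import Mathlib

open MeasureTheory

/-- `Δ(x₁,x₂,x₃) = (x₁+x₂+x₃)(x₁+x₂−x₃)(x₁−x₂+x₃)(−x₁+x₂+x₃)`. -/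
noncomputable def Delta (x₁ x₂ x₃ : ℝ) : ℝ :=
  (x₁ + x₂ + x₃) * (x₁ + x₂ - x₃) * (x₁ - x₂ + x₃) * (-x₁ + x₂ + x₃)

/-- The region `A_r` of ordered triangle-admissible triples. -/
def regionA (r : ℝ) : Set (ℝ × ℝ × ℝ) :=
  {p | r ≤ p.1 ∧ p.1 < p.2.1 ∧ p.2.1 < p.2.2 ∧ p.2.2 ≤ 1 ∧
    p.2.1 - p.1 ≤ p.2.2 ∧ p.2.2 ≤ p.1 + p.2.1}

/-- `Q(u,v) = Δ(u,v,1)`. -/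
noncomputable def Qfun (u v : ℝ) : ℝ := Delta u v 1

/-- The shape domain `Ω_r`. -/
def regionOmega (r : ℝ) : Set (ℝ × ℝ) :=
  {p | r < p.1 ∧ p.1 < 1 / 2 ∧ 1 - p.1 < p.2 ∧ p.2 < 1} ∪
  {p | 1 / 2 < p.1 ∧ p.1 < 1 ∧ p.1 < p.2 ∧ p.2 < 1}

open scoped ENNReal

lemma lint_smul_plane (f : ℝ × ℝ → ℝ≥0∞) (hf : Measurable f) {t : ℝ} (ht : 0 < t) :
    ∫⁻ q, f q = ENNReal.ofReal (t ^ 2) * ∫⁻ q, f (t • q) := by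
  have h := Measure.map_addHaar_smul (volume : Measure (ℝ × ℝ)) (ne_of_gt ht)
  have hrank : Module.finrank ℝ (ℝ × ℝ) = 2 := by simp
  rw [hrank] at h
  have h2 : ∫⁻ q, f (t • q) = ENNReal.ofReal |(t ^ 2)⁻¹| * ∫⁻ q, f q := by
    rw [← lintegral_map hf (measurable_const_smul t), h, lintegral_smul_measure, smul_eq_mul]
  rw [h2, ← mul_assoc, ← ENNReal.ofReal_mul (by positivity), abs_of_nonneg (by positivity),
    mul_inv_cancel₀ (by positivity)]
  simp

lemma measDelta : Measurable (fun z : (ℝ×ℝ)×ℝ => Delta z.1.1 z.1.2 z.2) := by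
  have h1 : Measurable (fun z : (ℝ×ℝ)×ℝ => z.1.1) := measurable_fst.fst
  have h2 : Measurable (fun z : (ℝ×ℝ)×ℝ => z.1.2) := measurable_fst.snd
  have h3 : Measurable (fun z : (ℝ×ℝ)×ℝ => z.2) := measurable_snd
  unfold Delta
  exact (((h1.add h2).add h3).mul (((h1.add h2).sub h3))).mul ((h1.sub h2).add h3) |>.mul
    ((h1.neg.add h2).add h3)

lemma measQ : Measurable (fun z : (ℝ×ℝ)×ℝ => Qfun z.1.1 z.1.2) := by
  have h1 : Measurable (fun z : (ℝ×ℝ)×ℝ => z.1.1) := measurable_fst.fst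
  have h2 : Measurable (fun z : (ℝ×ℝ)×ℝ => z.1.2) := measurable_fst.snd
  have h3 : Measurable (fun _ : (ℝ×ℝ)×ℝ => (1:ℝ)) := measurable_const
  unfold Qfun Delta
  exact (((h1.add h2).add h3).mul (((h1.add h2).sub h3))).mul ((h1.sub h2).add h3) |>.mul
    ((h1.neg.add h2).add h3)

lemma measQ2 : Measurable (fun q : ℝ×ℝ => Qfun q.1 q.2) := by
  have h1 : Measurable (fun q : ℝ×ℝ => q.1) := measurable_fst
  have h2 : Measurable (fun q : ℝ×ℝ => q.2) := measurable_snd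
  have h3 : Measurable (fun _ : ℝ×ℝ => (1:ℝ)) := measurable_const
  unfold Qfun Delta
  exact (((h1.add h2).add h3).mul (((h1.add h2).sub h3))).mul ((h1.sub h2).add h3) |>.mul
    ((h1.neg.add h2).add h3)

theorem stmt_0 (r a b c d : ℝ) (hr : r ∈ Set.Ioo (0 : ℝ) (1 / 2))
    (hl : a + b + c - 4 * d + 3 ≠ 0) :
    ∫⁻ p in regionA r,
        ENNReal.ofReal (p.1 ^ a * p.2.1 ^ b * p.2.2 ^ c * Delta p.1 p.2.1 p.2.2 ^ (-d)) =
    ∫⁻ p in regionOmega r,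
        ENNReal.ofReal ((a + b + c - 4 * d + 3)⁻¹ *
          (p.1 ^ a * p.2 ^ b * Qfun p.1 p.2 ^ (-d) *
            (1 - (r / p.1) ^ (a + b + c - 4 * d + 3)))) := by
  obtain ⟨hr0, hr2⟩ := hr
  set l : ℝ := a + b + c - 4 * d + 3 with hldef
  -- the basic functions and sets
  set φ : (ℝ×ℝ)×ℝ → ℝ≥0∞ := fun z =>
    ENNReal.ofReal (z.1.1 ^ a * z.1.2 ^ b * z.2 ^ c * Delta z.1.1 z.1.2 z.2 ^ (-d)) with hφdef
  set SA : Set ((ℝ×ℝ)×ℝ) := {z | r ≤ z.1.1 ∧ z.1.1 < z.1.2 ∧ z.1.2 < z.2 ∧ z.2 ≤ 1 ∧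
    z.1.2 - z.1.1 ≤ z.2 ∧ z.2 ≤ z.1.1 + z.1.2} with hSAdef
  set κ : (ℝ×ℝ)×ℝ → ℝ≥0∞ := fun z =>
    ENNReal.ofReal (z.2 ^ (l-1) * (z.1.1 ^ a * z.1.2 ^ b * Qfun z.1.1 z.1.2 ^ (-d))) with hκdef
  set B : Set ((ℝ×ℝ)×ℝ) := {z | (0 < z.2 ∧ z.2 ≤ 1 ∧ r ≤ z.2 * z.1.1) ∧
    z.1.1 < z.1.2 ∧ z.1.2 < 1 ∧ z.1.2 - z.1.1 ≤ 1 ∧ 1 ≤ z.1.1 + z.1.2} with hBdef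
  set ψ : ℝ×ℝ → ℝ≥0∞ := fun q =>
    ENNReal.ofReal (l⁻¹ * (q.1 ^ a * q.2 ^ b * Qfun q.1 q.2 ^ (-d) * (1 - (r / q.1) ^ l)))
    with hψdef
  set W : Set (ℝ×ℝ) := {q | q.1 < q.2 ∧ q.2 < 1 ∧ q.2 - q.1 ≤ 1 ∧ 1 ≤ q.1 + q.2} with hWdef
  -- measurability facts
  have hφm : Measurable φ := by
    apply Measurable.ennreal_ofReal
    exact (((measurable_fst.fst.pow_const a).mul (measurable_fst.snd.pow_const b)).mul
      (measurable_snd.pow_const c)).mul (measDelta.pow_const (-d))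
  have hκm : Measurable κ := by
    apply Measurable.ennreal_ofReal
    exact (measurable_snd.pow_const (l-1)).mul
      (((measurable_fst.fst.pow_const a).mul (measurable_fst.snd.pow_const b)).mul
        (measQ.pow_const (-d)))
  have hSAm : MeasurableSet SA := by
    have h1 : Measurable (fun z : (ℝ×ℝ)×ℝ => z.1.1) := measurable_fst.fst
    have h2 : Measurable (fun z : (ℝ×ℝ)×ℝ => z.1.2) := measurable_fst.snd
    have h3 : Measurable (fun z : (ℝ×ℝ)×ℝ => z.2) := measurable_snd
    exact (measurableSet_le measurable_const h1).inter ((measurableSet_lt h1 h2).inter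
      ((measurableSet_lt h2 h3).inter ((measurableSet_le h3 measurable_const).inter
      ((measurableSet_le (h2.sub h1) h3).inter (measurableSet_le h3 (h1.add h2))))))
  have hBm : MeasurableSet B := by
    have h1 : Measurable (fun z : (ℝ×ℝ)×ℝ => z.1.1) := measurable_fst.fst
    have h2 : Measurable (fun z : (ℝ×ℝ)×ℝ => z.1.2) := measurable_fst.snd
    have h3 : Measurable (fun z : (ℝ×ℝ)×ℝ => z.2) := measurable_snd
    exact (((measurableSet_lt measurable_const h3).inter
      ((measurableSet_le h3 measurable_const).inter
        (measurableSet_le measurable_const (h3.mul h1)))).inter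
      ((measurableSet_lt h1 h2).inter ((measurableSet_lt h2 measurable_const).inter
      ((measurableSet_le (h2.sub h1) measurable_const).inter
        (measurableSet_le measurable_const (h1.add h2))))))
  have hAm : MeasurableSet (regionA r) := by
    have h1 : Measurable (fun p : ℝ×ℝ×ℝ => p.1) := measurable_fst
    have h2 : Measurable (fun p : ℝ×ℝ×ℝ => p.2.1) := measurable_snd.fst
    have h3 : Measurable (fun p : ℝ×ℝ×ℝ => p.2.2) := measurable_snd.snd
    exact (measurableSet_le measurable_const h1).inter ((measurableSet_lt h1 h2).inter
      ((measurableSet_lt h2 h3).inter ((measurableSet_le h3 measurable_const).inter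
      ((measurableSet_le (h2.sub h1) h3).inter (measurableSet_le h3 (h1.add h2))))))
  have hgm : Measurable (SA.indicator φ) := hφm.indicator hSAm
  have hKm : Measurable (B.indicator κ) := hκm.indicator hBm
  -- Step 1: move to ((ℝ×ℝ)×ℝ)
  have step1 : ∫⁻ p in regionA r,
      ENNReal.ofReal (p.1 ^ a * p.2.1 ^ b * p.2.2 ^ c * Delta p.1 p.2.1 p.2.2 ^ (-d)) =
      ∫⁻ z, SA.indicator φ z := by
    have hFm : Measurable ((regionA r).indicator (fun p : ℝ×ℝ×ℝ =>
        ENNReal.ofReal (p.1 ^ a * p.2.1 ^ b * p.2.2 ^ c * Delta p.1 p.2.1 p.2.2 ^ (-d)))) := by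
      apply Measurable.indicator _ hAm
      apply Measurable.ennreal_ofReal
      have hD : Measurable (fun p : ℝ×ℝ×ℝ => Delta p.1 p.2.1 p.2.2) := by
        have h1 : Measurable (fun p : ℝ×ℝ×ℝ => p.1) := measurable_fst
        have h2 : Measurable (fun p : ℝ×ℝ×ℝ => p.2.1) := measurable_snd.fst
        have h3 : Measurable (fun p : ℝ×ℝ×ℝ => p.2.2) := measurable_snd.snd
        unfold Delta
        exact (((h1.add h2).add h3).mul (((h1.add h2).sub h3))).mul ((h1.sub h2).add h3) |>.mul
          ((h1.neg.add h2).add h3)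
      exact (((measurable_fst.pow_const a).mul (measurable_snd.fst.pow_const b)).mul
        (measurable_snd.snd.pow_const c)).mul (hD.pow_const (-d))
    rw [← lintegral_indicator hAm]
    rw [← volume_preserving_prodAssoc.lintegral_comp hFm]
    apply lintegral_congr
    intro z
    by_cases hz : z ∈ SA
    · rw [Set.indicator_of_mem hz]
      rw [Set.indicator_of_mem (show MeasurableEquiv.prodAssoc z ∈ regionA r from hz)]
      rfl
    · rw [Set.indicator_of_notMem hz]
      rw [Set.indicator_of_notMem (show MeasurableEquiv.prodAssoc z ∉ regionA r from hz)]
  -- Step 2+3+4: change of variables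
  have step2 : ∫⁻ z, SA.indicator φ z = ∫⁻ z, B.indicator κ z := by
    rw [Measure.volume_eq_prod, lintegral_prod_symm' _ hgm, lintegral_prod_symm' _ hKm]
    apply lintegral_congr
    intro t
    rcases le_or_gt t 0 with ht | ht
    · have hL : ∀ q : ℝ×ℝ, SA.indicator φ (q, t) = 0 := by
        intro q
        apply Set.indicator_of_notMem
        rintro ⟨h1, h2, h3, -⟩
        simp only at h1 h2 h3
        linarith
      have hR : ∀ q : ℝ×ℝ, B.indicator κ (q, t) = 0 := by
        intro q
        apply Set.indicator_of_notMem
        rintro ⟨⟨h1, -⟩, -⟩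
        simp only at h1
        linarith
      simp only [hL, hR]
    · rw [lint_smul_plane (fun q => SA.indicator φ (q, t))
        (hgm.comp (measurable_id.prodMk measurable_const)) ht,
        ← lintegral_const_mul (ENNReal.ofReal (t ^ 2))
          (show Measurable (fun q : ℝ×ℝ => SA.indicator φ (t • q, t)) from
            hgm.comp ((measurable_const_smul t).prodMk measurable_const))]
      apply lintegral_congr
      intro q
      have hsmul : (t • q) = (t * q.1, t * q.2) := rfl
      have hmem : ((t • q : ℝ×ℝ), t) ∈ SA ↔ ((q, t) : (ℝ×ℝ)×ℝ) ∈ B := by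
        rw [hsmul]
        simp only [hSAdef, hBdef, Set.mem_setOf_eq]
        constructor
        · rintro ⟨h1, h2, h3, h4, h5, h6⟩
          refine ⟨⟨ht, h4, h1⟩, ?_, ?_, ?_, ?_⟩ <;> nlinarith
        · rintro ⟨⟨-, ht1, hru⟩, huv, hv1, hvu, huv1⟩
          refine ⟨hru, ?_, ?_, ht1, ?_, ?_⟩ <;> nlinarith
      by_cases hqB : ((q, t) : (ℝ×ℝ)×ℝ) ∈ B
      · rw [Set.indicator_of_mem (hmem.2 hqB), Set.indicator_of_mem hqB]
        obtain ⟨⟨ht0, ht1, hru⟩, huv, hv1, hvu, huv1⟩ := hqB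
        simp only at ht0 ht1 hru huv hv1 hvu hvu huv1
        have hu : 0 < q.1 := by nlinarith
        have hv : 0 < q.2 := lt_trans hu huv
        have hQ : 0 ≤ Qfun q.1 q.2 := by
          unfold Qfun Delta
          have f1 : (0:ℝ) ≤ q.1 + q.2 + 1 := by linarith
          have f2 : (0:ℝ) ≤ q.1 + q.2 - 1 := by linarith
          have f3 : (0:ℝ) ≤ q.1 - q.2 + 1 := by linarith
          have f4 : (0:ℝ) ≤ -q.1 + q.2 + 1 := by linarith
          exact mul_nonneg (mul_nonneg (mul_nonneg f1 f2) f3) f4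
        simp only [hφdef, hκdef, hsmul]
        rw [← ENNReal.ofReal_mul (by positivity : (0:ℝ) ≤ t ^ 2)]
        congr 1
        have hD : Delta (t * q.1) (t * q.2) t = (t*t*t*t) * Qfun q.1 q.2 := by
          simp only [Qfun, Delta]; ring
        have h4 : (t*t*t*t) = t ^ ((4:ℕ):ℝ) := by rw [Real.rpow_natCast]; ring
        have h2 : t ^ (2:ℕ) = t ^ ((2:ℕ):ℝ) := (Real.rpow_natCast t 2).symm
        rw [hD, h4, Real.mul_rpow (Real.rpow_nonneg ht.le _) hQ,
          ← Real.rpow_mul ht.le, Real.mul_rpow ht.le hu.le, Real.mul_rpow ht.le hv.le, h2,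
          show t ^ (l - 1) = t ^ ((2:ℕ):ℝ) * t ^ a * t ^ b * t ^ c * t ^ (((4:ℕ):ℝ) * (-d)) by
            rw [← Real.rpow_add ht, ← Real.rpow_add ht, ← Real.rpow_add ht, ← Real.rpow_add ht]
            congr 1
            push_cast
            rw [hldef]
            ring]
        ring
      · rw [Set.indicator_of_notMem (fun h => hqB (hmem.1 h)),
          Set.indicator_of_notMem hqB, mul_zero]
  -- helper facts
  have hQnn : ∀ q : ℝ×ℝ, q.1 < q.2 → q.2 < 1 → q.2 - q.1 ≤ 1 → 1 ≤ q.1 + q.2 →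
      0 ≤ Qfun q.1 q.2 := by
    intro q huv hv1 hvu huv1
    simp only [Qfun, Delta]
    have f1 : (0:ℝ) ≤ q.1 + q.2 + 1 := by linarith
    have f2 : (0:ℝ) ≤ q.1 + q.2 - 1 := by linarith
    have f3 : (0:ℝ) ≤ q.1 - q.2 + 1 := by linarith
    have f4 : (0:ℝ) ≤ -q.1 + q.2 + 1 := by linarith
    exact mul_nonneg (mul_nonneg (mul_nonneg f1 f2) f3) f4
  have hψzero : ∀ q : ℝ×ℝ, 0 < q.1 → 0 < q.2 → 0 ≤ Qfun q.1 q.2 → q.1 ≤ r → ψ q = 0 := by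
    intro q hu hv hQ hur
    have hY : 0 ≤ q.1 ^ a * q.2 ^ b * Qfun q.1 q.2 ^ (-d) :=
      mul_nonneg (mul_nonneg (Real.rpow_nonneg hu.le a) (Real.rpow_nonneg hv.le b))
        (Real.rpow_nonneg hQ (-d))
    have hru1 : 1 ≤ r / q.1 := (le_div_iff₀ hu).2 (by linarith)
    simp only [hψdef]
    apply ENNReal.ofReal_eq_zero.2
    rcases hl.lt_or_gt with hlneg | hlpos
    · have hR : (r / q.1) ^ l ≤ 1 := Real.rpow_le_one_of_one_le_of_nonpos hru1 hlneg.le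
      exact mul_nonpos_of_nonpos_of_nonneg (inv_nonpos.2 hlneg.le)
        (mul_nonneg hY (by linarith))
    · have hR : 1 ≤ (r / q.1) ^ l := by
        calc (1:ℝ) = 1 ^ l := (Real.one_rpow l).symm
        _ ≤ (r / q.1) ^ l := Real.rpow_le_rpow (by norm_num) hru1 hlpos.le
      exact mul_nonpos_of_nonneg_of_nonpos (inv_nonneg.2 hlpos.le)
        (mul_nonpos_of_nonneg_of_nonpos hY (by linarith))
  have step5 : ∫⁻ z, B.indicator κ z = ∫⁻ q, W.indicator ψ q := by
    rw [Measure.volume_eq_prod, lintegral_prod _ hKm.aemeasurable]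
    apply lintegral_congr
    intro q
    by_cases hqW : q ∈ W
    · have hqW2 := hqW
      obtain ⟨huv, hv1, hvu, huv1⟩ :=
        (hqW2 : q.1 < q.2 ∧ q.2 < 1 ∧ q.2 - q.1 ≤ 1 ∧ 1 ≤ q.1 + q.2)
      have hu : 0 < q.1 := by linarith
      have hv : 0 < q.2 := lt_trans hu huv
      have hQ : 0 ≤ Qfun q.1 q.2 := hQnn q huv hv1 hvu huv1
      have hY : 0 ≤ q.1 ^ a * q.2 ^ b * Qfun q.1 q.2 ^ (-d) :=
        mul_nonneg (mul_nonneg (Real.rpow_nonneg hu.le a) (Real.rpow_nonneg hv.le b))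
          (Real.rpow_nonneg hQ (-d))
      have hIcc : ∫⁻ t, B.indicator κ (q, t) = ∫⁻ t in Set.Icc (r / q.1) 1,
          ENNReal.ofReal (t ^ (l - 1) * (q.1 ^ a * q.2 ^ b * Qfun q.1 q.2 ^ (-d))) := by
        rw [← lintegral_indicator measurableSet_Icc]
        apply lintegral_congr
        intro t
        by_cases htm : t ∈ Set.Icc (r / q.1) 1
        · have h0t : 0 < t := lt_of_lt_of_le (div_pos hr0 hu) htm.1
          have hmemB : ((q, t) : (ℝ×ℝ)×ℝ) ∈ B :=
            ⟨⟨h0t, htm.2, (div_le_iff₀ hu).1 htm.1⟩, huv, hv1, hvu, huv1⟩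
          rw [Set.indicator_of_mem hmemB, Set.indicator_of_mem htm]
        · rw [Set.indicator_of_notMem htm, Set.indicator_of_notMem]
          rintro ⟨⟨h0t, ht1, hru⟩, -⟩
          exact htm ⟨(div_le_iff₀ hu).2 hru, ht1⟩
      rw [hIcc, Set.indicator_of_mem hqW]
      rcases le_or_gt q.1 r with hur | hur
      · have hzero : volume (Set.Icc (r / q.1) 1) = 0 := by
          rw [Real.volume_Icc]
          apply ENNReal.ofReal_eq_zero.2
          have : 1 ≤ r / q.1 := (le_div_iff₀ hu).2 (by linarith)
          linarith
        rw [setLIntegral_measure_zero _ _ hzero, hψzero q hu hv hQ hur]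
      · have hru1 : r / q.1 < 1 := (div_lt_one hu).2 hur
        have hru0 : 0 < r / q.1 := div_pos hr0 hu
        rw [(Measure.restrict_congr_set Ioc_ae_eq_Icc).symm]
        have hcont : ContinuousOn
            (fun t : ℝ => t ^ (l - 1) * (q.1 ^ a * q.2 ^ b * Qfun q.1 q.2 ^ (-d)))
            (Set.Icc (r / q.1) 1) :=
          (continuousOn_id.rpow_const fun x hx =>
            Or.inl (ne_of_gt (lt_of_lt_of_le hru0 hx.1))).mul continuousOn_const
        have hint : IntegrableOn
            (fun t : ℝ => t ^ (l - 1) * (q.1 ^ a * q.2 ^ b * Qfun q.1 q.2 ^ (-d)))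
            (Set.Ioc (r / q.1) 1) :=
          (hcont.integrableOn_Icc).mono_set Set.Ioc_subset_Icc_self
        have hnn : 0 ≤ᵐ[volume.restrict (Set.Ioc (r / q.1) 1)]
            fun t : ℝ => t ^ (l - 1) * (q.1 ^ a * q.2 ^ b * Qfun q.1 q.2 ^ (-d)) := by
          refine (ae_restrict_iff' measurableSet_Ioc).2 (ae_of_all _ fun t ht => ?_)
          exact mul_nonneg (Real.rpow_nonneg (le_of_lt (lt_trans hru0 ht.1)) _) hY
        rw [← ofReal_integral_eq_lintegral_ofReal hint hnn,
          ← intervalIntegral.integral_of_le hru1.le,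
          intervalIntegral.integral_mul_const,
          integral_rpow (Or.inr ⟨by intro h; apply hl; linarith,
            Set.notMem_uIcc_of_lt hru0 one_pos⟩),
          sub_add_cancel, Real.one_rpow]
        simp only [hψdef]
        congr 1
        ring
    · rw [Set.indicator_of_notMem hqW]
      have hz : ∀ t : ℝ, B.indicator κ (q, t) = 0 := by
        intro t
        apply Set.indicator_of_notMem
        rintro ⟨-, hrest⟩
        exact hqW hrest
      simp only [hz, lintegral_zero]
  have hN1 : volume {q : ℝ×ℝ | q.1 = 1/2} = 0 := by
    have hs : {q : ℝ×ℝ | q.1 = 1/2} = ({(1/2 : ℝ)} : Set ℝ) ×ˢ (Set.univ : Set ℝ) := by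
      ext q
      simp only [Set.mem_setOf_eq, Set.mem_prod, Set.mem_singleton_iff, Set.mem_univ, and_true]
    rw [hs, Measure.volume_eq_prod, Measure.prod_prod]
    simp
  have hN2 : volume {q : ℝ×ℝ | q.1 + q.2 = 1} = 0 := by
    have hs : MeasurableSet {q : ℝ×ℝ | q.1 + q.2 = 1} :=
      (isClosed_eq (continuous_fst.add continuous_snd) continuous_const).measurableSet
    rw [Measure.volume_eq_prod, Measure.prod_apply hs]
    have hfib : ∀ x : ℝ, (Prod.mk x ⁻¹' {q : ℝ×ℝ | q.1 + q.2 = 1}) = {1 - x} := by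
      intro x
      ext y
      simp only [Set.mem_preimage, Set.mem_setOf_eq, Set.mem_singleton_iff]
      constructor <;> intro h <;> linarith
    simp [hfib]
  have step6 : ∫⁻ q, W.indicator ψ q = ∫⁻ q in regionOmega r, ψ q := by
    have hOm : MeasurableSet (regionOmega r) := by
      have h1 : Measurable (fun q : ℝ×ℝ => q.1) := measurable_fst
      have h2 : Measurable (fun q : ℝ×ℝ => q.2) := measurable_snd
      apply MeasurableSet.union
      · exact (measurableSet_lt measurable_const h1).inter
          ((measurableSet_lt h1 measurable_const).inter
          ((measurableSet_lt (measurable_const.sub h1) h2).inter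
            (measurableSet_lt h2 measurable_const)))
      · exact (measurableSet_lt measurable_const h1).inter
          ((measurableSet_lt h1 measurable_const).inter
          ((measurableSet_lt h1 h2).inter (measurableSet_lt h2 measurable_const)))
    rw [← lintegral_indicator hOm]
    apply lintegral_congr_ae
    have hN : volume ({q : ℝ×ℝ | q.1 = 1/2} ∪ {q : ℝ×ℝ | q.1 + q.2 = 1}) = 0 :=
      measure_union_null hN1 hN2
    filter_upwards [measure_eq_zero_iff_ae_notMem.1 hN] with q hq
    have hq1 : q.1 ≠ 1/2 := fun h => hq (Or.inl h)
    have hq2 : q.1 + q.2 ≠ 1 := fun h => hq (Or.inr h)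
    by_cases hΩ : q ∈ regionOmega r
    · have hqW : q ∈ W := by
        rcases hΩ with ⟨h1, h2, h3, h4⟩ | ⟨h1, h2, h3, h4⟩
        · exact ⟨by linarith, h4, by linarith, by linarith⟩
        · exact ⟨h3, h4, by linarith, by linarith⟩
      rw [Set.indicator_of_mem hqW, Set.indicator_of_mem hΩ]
    · by_cases hqW : q ∈ W
      · rw [Set.indicator_of_mem hqW, Set.indicator_of_notMem hΩ]
        have hqW2 := hqW
        obtain ⟨huv, hv1, hvu, huv1⟩ :=
          (hqW2 : q.1 < q.2 ∧ q.2 < 1 ∧ q.2 - q.1 ≤ 1 ∧ 1 ≤ q.1 + q.2)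
        have hu : 0 < q.1 := by linarith
        have hv : 0 < q.2 := lt_trans hu huv
        have huvs : 1 < q.1 + q.2 := lt_of_le_of_ne huv1 (Ne.symm hq2)
        have hur : q.1 ≤ r := by
          by_contra hcon
          push_neg at hcon
          apply hΩ
          rcases lt_or_gt_of_ne hq1 with hhalf | hhalf
          · exact Or.inl ⟨hcon, hhalf, by linarith, hv1⟩
          · exact Or.inr ⟨hhalf, lt_trans huv hv1, huv, hv1⟩
        exact hψzero q hu hv (hQnn q huv hv1 hvu huv1) hur
      · rw [Set.indicator_of_notMem hqW, Set.indicator_of_notMem hΩ]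
  rw [step1, step2, step5, step6]
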